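/- For every natural number n ≥ 1, the function t ↦ log Γ(t + n) − log Γ(t) is strictly concave on the interval (0, ∞). -/

import Mathlib

open Real Set Finset

lemma log_shift_strictConcaveOn (c : ℝ) (hc : 0 ≤ c) :
    StrictConcaveOn ℝ (Set.Ioi (0 : ℝ)) (fun t : ℝ => Real.log (t + c)) := by
  refine ⟨convex_Ioi 0, fun x hx y hy hxy a b ha hb hab => ?_⟩
  have hx' : x + c ∈ Set.Ioi (0 : ℝ) := by simp at hx ⊢; linarith
  have hy' : y + c ∈ Set.Ioi (0 : ℝ) := by simp at hy ⊢; linarith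
  have hxy' : x + c ≠ y + c := by intro h; exact hxy (by linarith)
  have := strictConcaveOn_log_Ioi.2 hx' hy' hxy' ha hb hab
  have heq : a • (x + c) + b • (y + c) = (a • x + b • y) + c := by
    simp [smul_eq_mul]; ring_nf; nlinarith [hab]
  rwa [heq] at this

lemma sum_log_strictConcaveOn (n : ℕ) (hn : 1 ≤ n) :
    StrictConcaveOn ℝ (Set.Ioi (0 : ℝ))
      (fun t : ℝ => ∑ k ∈ Finset.range n, Real.log (t + k)) := by
  induction n with
  | zero => omega
  | succ m ih =>
    rcases Nat.eq_or_lt_of_le hn with h | h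
    · simp only [← h]
      simpa using log_shift_strictConcaveOn 0 le_rfl
    · have hm : 1 ≤ m := by omega
      have := (ih hm).add (log_shift_strictConcaveOn m (Nat.cast_nonneg m))
      simpa [Finset.sum_range_succ, Pi.add_def] using this

lemma gamma_diff_eq (n : ℕ) (t : ℝ) (ht : t ∈ Set.Ioi (0 : ℝ)) :
    Real.log (Real.Gamma (t + n)) - Real.log (Real.Gamma t)
      = ∑ k ∈ Finset.range n, Real.log (t + k) := by
  induction n with
  | zero => simp
  | succ m ih =>
    have ht' : (0:ℝ) < t := ht
    have h1 : t + (m+1 : ℕ) = (t + m) + 1 := by push_cast; ring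
    have h2 : Real.Gamma ((t + m) + 1) = (t + m) * Real.Gamma (t + m) :=
      Real.Gamma_add_one (by positivity)
    have hpos : 0 < t + (m:ℝ) := by positivity
    have hgpos : 0 < Real.Gamma (t + m) := Real.Gamma_pos_of_pos hpos
    rw [h1, h2, Real.log_mul (ne_of_gt hpos) (ne_of_gt hgpos),
      Finset.sum_range_succ, ← ih]
    ring

/-- For every natural number `n ≥ 1`, the function `t ↦ log Γ(t+n) − log Γ(t)` is
strictly concave on `(0, ∞)`. -/
theorem logGamma_ratio_strictConcaveOn (n : ℕ) (hn : 1 ≤ n) :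
    StrictConcaveOn ℝ (Set.Ioi (0 : ℝ))
      (fun t : ℝ => Real.log (Real.Gamma (t + n)) - Real.log (Real.Gamma t)) := by
  have h := sum_log_strictConcaveOn n hn
  refine ⟨convex_Ioi 0, fun x hx y hy hxy a b ha hb hab => ?_⟩
  have hmem : a • x + b • y ∈ Set.Ioi (0 : ℝ) :=
    (convex_Ioi 0) hx hy ha.le hb.le hab
  dsimp only
  rw [gamma_diff_eq n x hx, gamma_diff_eq n y hy, gamma_diff_eq n _ hmem]
  exact h.2 hx hy hxy ha hb hab
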